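/- If f : [a,b] → ℝ has negligible variation on a set E ⊆ [a,b], then f'(x) = 0 for almost every x ∈ E at which f is differentiable; more strongly, the set of x ∈ E where some Dini derivative of f is nonzero has Lebesgue measure zero. -/

import Mathlib

open Set MeasureTheory Filter
open scoped ENNReal NNReal
open scoped Classical

/-- A tagged partition of `[a, b]`: division points `t 0 = a ≤ t 1 ≤ ⋯ ≤ t n = b`
together with tags `tag i ∈ [t i, t (i+1)]`. -/
structure TaggedPartition (a b : ℝ) where
  n : ℕ
  t : ℕ → ℝ
  tag : ℕ → ℝ
  t_first : t 0 = a
  t_last : t n = b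
  t_mono : ∀ i < n, t i ≤ t (i + 1)
  tag_mem : ∀ i < n, tag i ∈ Set.Icc (t i) (t (i + 1))

/-- A tagged partition is subordinate to a gauge `δ` if each interval is contained in the
open ball of radius `δ` around its tag. -/
def TaggedPartition.Subordinate {a b : ℝ} (P : TaggedPartition a b) (δ : ℝ → ℝ) : Prop :=
  ∀ i < P.n,
    Set.Icc (P.t i) (P.t (i + 1)) ⊆ Set.Ioo (P.tag i - δ (P.tag i)) (P.tag i + δ (P.tag i))

/-- A gauge on `[a, b]` is positive on `[a, b]`. -/
def IsGauge (a b : ℝ) (δ : ℝ → ℝ) : Prop := ∀ x ∈ Set.Icc a b, 0 < δ x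

/-- `f` has negligible variation on `E ⊆ [a, b]`. -/

def NegVar (a b : ℝ) (f : ℝ → ℝ) (E : Set ℝ) : Prop :=
  ∀ ε > 0, ∃ δ : ℝ → ℝ, IsGauge a b δ ∧ ∀ P : TaggedPartition a b, P.Subordinate δ →
    (∑ i ∈ Finset.range P.n,
      if P.tag i ∈ E then |f (P.t (i + 1)) - f (P.t i)| else 0) < ε

/-- `f` has negligible conditional variation on `E ⊆ [a, b]`. -/

def NegCondVar (a b : ℝ) (f : ℝ → ℝ) (E : Set ℝ) : Prop :=
  ∀ ε > 0, ∃ δ : ℝ → ℝ, IsGauge a b δ ∧ ∀ P : TaggedPartition a b, P.Subordinate δ →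
    |∑ i ∈ Finset.range P.n,
      if P.tag i ∈ E then f (P.t (i + 1)) - f (P.t i) else 0| < ε

/-- `I` is the Henstock–Kurzweil integral of `h` on `[a, b]` (with `a ≤ b`). -/
def HKIntegralTo (a b : ℝ) (h : ℝ → ℝ) (I : ℝ) : Prop :=
  ∀ ε > 0, ∃ δ : ℝ → ℝ, IsGauge a b δ ∧ ∀ P : TaggedPartition a b, P.Subordinate δ →
    |(∑ i ∈ Finset.range P.n, h (P.tag i) * (P.t (i + 1) - P.t i)) - I| < ε

/-- Oriented HK integral: `(HK)∫_a^b h = I`, with the convention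
`(HK)∫_b^a h = -(HK)∫_a^b h`. -/
def HKIntegral (a b : ℝ) (h : ℝ → ℝ) (I : ℝ) : Prop :=
  if a ≤ b then HKIntegralTo a b h I else HKIntegralTo b a h (-I)


namespace TaggedPartition

variable {a b c : ℝ}

noncomputable def Esum (f : ℝ → ℝ) (E : Set ℝ) {a b : ℝ} (P : TaggedPartition a b) : ℝ :=
  ∑ i ∈ Finset.range P.n, if P.tag i ∈ E then |f (P.t (i + 1)) - f (P.t i)| else 0

lemma Esum_nonneg (f : ℝ → ℝ) (E : Set ℝ) (P : TaggedPartition a b) : 0 ≤ P.Esum f E :=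
  Finset.sum_nonneg fun i _ => by positivity

def refl (a : ℝ) : TaggedPartition a a where
  n := 0
  t := fun _ => a
  tag := fun _ => a
  t_first := rfl
  t_last := rfl
  t_mono := fun i hi => absurd hi (Nat.not_lt_zero i)
  tag_mem := fun i hi => absurd hi (Nat.not_lt_zero i)

lemma refl_subordinate (a : ℝ) (δ : ℝ → ℝ) : (refl a).Subordinate δ :=
  fun i hi => absurd hi (Nat.not_lt_zero i)

def single (a b x : ℝ) (h1 : a ≤ x) (h2 : x ≤ b) : TaggedPartition a b where
  n := 1
  t := fun i => if i = 0 then a else b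
  tag := fun _ => x
  t_first := if_pos rfl
  t_last := if_neg one_ne_zero
  t_mono := fun i hi => by
    interval_cases i
    simp only [if_pos rfl, if_neg one_ne_zero]
    exact h1.trans h2
  tag_mem := fun i hi => by
    interval_cases i
    simp only [if_pos rfl, if_neg one_ne_zero]
    exact ⟨h1, h2⟩

end TaggedPartition

namespace TaggedPartition

variable {a b c : ℝ}

def glue (P : TaggedPartition a b) (Q : TaggedPartition b c) : TaggedPartition a c where
  n := P.n + Q.n
  t := fun i => if i ≤ P.n then P.t i else Q.t (i - P.n)
  tag := fun i => if i < P.n then P.tag i else Q.tag (i - P.n)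
  t_first := by
    show (if 0 ≤ P.n then P.t 0 else Q.t (0 - P.n)) = a
    rw [if_pos (Nat.zero_le _), P.t_first]
  t_last := by
    show (if P.n + Q.n ≤ P.n then P.t (P.n + Q.n) else Q.t (P.n + Q.n - P.n)) = c
    rcases Nat.eq_zero_or_pos Q.n with h | h
    · rw [if_pos (by omega), show P.n + Q.n = P.n by omega, P.t_last, ← Q.t_first,
        show (0:ℕ) = Q.n by omega]
      exact Q.t_last
    · rw [if_neg (by omega), show P.n + Q.n - P.n = Q.n by omega]
      exact Q.t_last
  t_mono := by
    intro i hi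
    rcases lt_or_ge i P.n with h | h
    · have h1 : i ≤ P.n := h.le
      have h2 : i + 1 ≤ P.n := h
      simp only [h1, h2, if_pos]
      exact P.t_mono i h
    · obtain ⟨j, rfl⟩ : ∃ j, i = P.n + j := ⟨i - P.n, by omega⟩
      have hj : j < Q.n := by omega
      by_cases hj0 : j = 0
      · subst hj0
        have h1 : P.n + 0 ≤ P.n := by omega
        have h2 : ¬ P.n + 0 + 1 ≤ P.n := by omega
        have h3 := Q.t_mono 0 hj
        rw [Q.t_first] at h3
        simp only [h1, if_pos, h2, if_false, Nat.add_zero, Nat.add_sub_cancel_left,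
          Nat.sub_self, le_refl, ite_true, lt_self_iff_false, ite_false, P.t_last,
          Nat.zero_add] at h3 ⊢
        exact h3
      · have h1 : ¬ P.n + j ≤ P.n := by omega
        have h2 : ¬ P.n + j + 1 ≤ P.n := by omega
        simp only [h1, h2, if_false]
        have e1 : P.n + j - P.n = j := by omega
        have e2 : P.n + j + 1 - P.n = j + 1 := by omega
        rw [e1, e2]
        exact Q.t_mono j hj
  tag_mem := by
    intro i hi
    rcases lt_or_ge i P.n with h | h
    · have h1 : i ≤ P.n := h.le
      have h2 : i + 1 ≤ P.n := h
      simp only [h, h1, h2, if_pos]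
      exact P.tag_mem i h
    · obtain ⟨j, rfl⟩ : ∃ j, i = P.n + j := ⟨i - P.n, by omega⟩
      have hj : j < Q.n := by omega
      have h0 : ¬ P.n + j < P.n := by omega
      have e1 : P.n + j - P.n = j := by omega
      have e2 : P.n + j + 1 - P.n = j + 1 := by omega
      by_cases hj0 : j = 0
      · subst hj0
        have h1 : P.n + 0 ≤ P.n := by omega
        have h2 : ¬ P.n + 0 + 1 ≤ P.n := by omega
        have h3 := Q.tag_mem 0 hj
        rw [Q.t_first] at h3
        simp only [h0, h1, if_pos, h2, if_false, Nat.add_zero, Nat.add_sub_cancel_left,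
          Nat.sub_self, le_refl, ite_true, lt_self_iff_false, ite_false, P.t_last,
          Nat.zero_add] at h3 ⊢
        exact h3
      · have h1 : ¬ P.n + j ≤ P.n := by omega
        have h2 : ¬ P.n + j + 1 ≤ P.n := by omega
        simp only [h0, h1, h2, if_false, e1, e2]
        exact Q.tag_mem j hj

lemma glue_t_left (P : TaggedPartition a b) (Q : TaggedPartition b c) {i : ℕ} (h : i ≤ P.n) :
    (P.glue Q).t i = P.t i := by simp [glue, h]

lemma glue_t_right (P : TaggedPartition a b) (Q : TaggedPartition b c) (j : ℕ) :
    (P.glue Q).t (P.n + j) = Q.t j := by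
  by_cases hj : j = 0
  · subst hj
    simp [glue, P.t_last, ← Q.t_first]
  · have h1 : ¬ P.n + j ≤ P.n := by omega
    have e1 : P.n + j - P.n = j := by omega
    simp [glue, h1, e1]

lemma glue_tag_left (P : TaggedPartition a b) (Q : TaggedPartition b c) {i : ℕ} (h : i < P.n) :
    (P.glue Q).tag i = P.tag i := by simp [glue, h]

lemma glue_tag_right (P : TaggedPartition a b) (Q : TaggedPartition b c) (j : ℕ) :
    (P.glue Q).tag (P.n + j) = Q.tag j := by
  have h0 : ¬ P.n + j < P.n := by omega
  have e1 : P.n + j - P.n = j := by omega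
  simp [glue, h0, e1]

lemma glue_subordinate {δ : ℝ → ℝ} {P : TaggedPartition a b} {Q : TaggedPartition b c}
    (hP : P.Subordinate δ) (hQ : Q.Subordinate δ) : (P.glue Q).Subordinate δ := by
  intro i hi
  have hi' : i < P.n + Q.n := hi
  rcases lt_or_ge i P.n with h | h
  · rw [glue_t_left P Q h.le, glue_t_left P Q (by omega : i + 1 ≤ P.n), glue_tag_left P Q h]
    exact hP i h
  · obtain ⟨j, rfl⟩ : ∃ j, i = P.n + j := ⟨i - P.n, by omega⟩
    have hj : j < Q.n := by omega
    rw [glue_t_right P Q j, show P.n + j + 1 = P.n + (j + 1) by omega, glue_t_right P Q (j + 1),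
      glue_tag_right P Q j]
    exact hQ j hj

lemma glue_Esum (f : ℝ → ℝ) (E : Set ℝ) (P : TaggedPartition a b) (Q : TaggedPartition b c) :
    (P.glue Q).Esum f E = P.Esum f E + Q.Esum f E := by
  unfold Esum
  show ∑ i ∈ Finset.range (P.n + Q.n), _ = _
  rw [Finset.sum_range_add]
  congr 1
  · apply Finset.sum_congr rfl
    intro i hi
    have hi' : i < P.n := Finset.mem_range.mp hi
    rw [glue_t_left P Q hi'.le, glue_t_left P Q (by omega : i + 1 ≤ P.n), glue_tag_left P Q hi']
  · apply Finset.sum_congr rfl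
    intro j hj
    have hj' : j < Q.n := Finset.mem_range.mp hj
    rw [glue_t_right P Q j, show P.n + j + 1 = P.n + (j + 1) by omega, glue_t_right P Q (j + 1),
      glue_tag_right P Q j]

end TaggedPartition

namespace TaggedPartition

variable {a b c : ℝ}

lemma single_subordinate {δ : ℝ → ℝ} {a b x : ℝ} (h1 : a ≤ x) (h2 : x ≤ b)
    (h : Set.Icc a b ⊆ Set.Ioo (x - δ x) (x + δ x)) :
    (single a b x h1 h2).Subordinate δ := by
  intro i hi
  have : i = 0 := Nat.lt_one_iff.mp hi
  subst this
  simpa [single] using h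

lemma single_Esum {f : ℝ → ℝ} {E : Set ℝ} {a b x : ℝ} (h1 : a ≤ x) (h2 : x ≤ b)
    (hx : x ∈ E) : (single a b x h1 h2).Esum f E = |f b - f a| := by
  simp [Esum, single, hx]

lemma cousin (a b : ℝ) (hab : a ≤ b) (δ : ℝ → ℝ) (hδ : ∀ x ∈ Set.Icc a b, 0 < δ x) :
    ∃ P : TaggedPartition a b, P.Subordinate δ := by
  set S : Set ℝ := {x | x ∈ Set.Icc a b ∧ ∃ P : TaggedPartition a x, P.Subordinate δ} with hS
  have haS : a ∈ S := ⟨⟨le_refl a, hab⟩, refl a, refl_subordinate a δ⟩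
  have hbdd : BddAbove S := ⟨b, fun x hx => hx.1.2⟩
  have hSne : S.Nonempty := ⟨a, haS⟩
  set s := sSup S with hs
  have has : a ≤ s := le_csSup hbdd haS
  have hsb : s ≤ b := csSup_le hSne fun x hx => hx.1.2
  have hδs : 0 < δ s := hδ s ⟨has, hsb⟩
  obtain ⟨x, hxS, hxgt⟩ : ∃ x ∈ S, s - δ s < x :=
    exists_lt_of_lt_csSup hSne (by linarith)
  have hxs : x ≤ s := le_csSup hbdd hxS
  obtain ⟨⟨hax, hxb⟩, P, hP⟩ := hxS
  set y := min b (s + δ s / 2) with hy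
  have hsy : s ≤ y := le_min hsb (by linarith)
  have hyb : y ≤ b := min_le_left _ _
  have hxy : x ≤ y := hxs.trans hsy
  have hxsy : s ∈ Set.Icc x y := ⟨hxs, hsy⟩
  have hsub : Set.Icc x y ⊆ Set.Ioo (s - δ s) (s + δ s) := by
    intro z hz
    constructor
    · linarith [hz.1]
    · have : z ≤ y := hz.2
      have : y ≤ s + δ s / 2 := min_le_right _ _
      linarith [hz.2]
  have hQ := single_subordinate (δ := δ) hxs hsy hsub
  have hyS : y ∈ S := ⟨⟨hax.trans hxy, hyb⟩, (P.glue (single x y s hxs hsy)),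
    glue_subordinate hP hQ⟩
  have hys : y ≤ s := le_csSup hbdd hyS
  have hsb' : s = b := by
    by_contra hne
    have hslt : s < b := lt_of_le_of_ne hsb hne
    have : s < y := lt_min hslt (by linarith)
    linarith
  have hδb : 0 < δ b := hsb' ▸ hδs
  have hyeq : y = b := le_antisymm hyb
    (by rw [hy, hsb']; exact le_min (le_refl b) (by linarith))
  have hbS : b ∈ S := hyeq ▸ hyS
  exact hbS.2

end TaggedPartition

open TaggedPartition in
lemma key_lemma (a : ℝ) (f : ℝ → ℝ) (E : Set ℝ) (δ : ℝ → ℝ)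
    {ι : Type*} [DecidableEq ι] (u v x : ι → ℝ) (s : Finset ι) :
    ∀ (b c : ℝ), a ≤ c → c ≤ b → (∀ z ∈ Set.Icc a b, 0 < δ z) →
    (∀ j ∈ s, a ≤ u j ∧ u j < v j ∧ v j ≤ c ∧ x j ∈ E ∧ u j ≤ x j ∧ x j ≤ v j ∧
      Set.Icc (u j) (v j) ⊆ Set.Ioo (x j - δ (x j)) (x j + δ (x j))) →
    (Set.Pairwise ↑s fun j k => Disjoint (Set.Icc (u j) (v j)) (Set.Icc (u k) (v k))) →
    ∃ P : TaggedPartition a c, P.Subordinate δ ∧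
      ∑ j ∈ s, |f (v j) - f (u j)| ≤ P.Esum f E := by
  induction s using Finset.strongInduction with
  | _ s ih =>
    intro b c hac hcb hδ hmem hdisj
    rcases s.eq_empty_or_nonempty with rfl | hne
    · obtain ⟨P, hP⟩ := cousin a c hac δ (fun z hz => hδ z ⟨hz.1, hz.2.trans hcb⟩)
      exact ⟨P, hP, by simpa using P.Esum_nonneg f E⟩
    · obtain ⟨j, hj, hjmax⟩ := s.exists_max_image u hne
      obtain ⟨hauj, hujvj, hvjc, hxjE, hujxj, hxjvj, hsubj⟩ := hmem j hj
      -- every other interval is to the left of u j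
      have hleft : ∀ k ∈ s.erase j, v k ≤ u j := by
        intro k hk
        have hkj : k ≠ j := Finset.ne_of_mem_erase hk
        have hks : k ∈ s := Finset.mem_of_mem_erase hk
        have huk := hjmax k hks
        by_contra hgt
        push_neg at hgt
        obtain ⟨_, hukvk, _, _, _, _, _⟩ := hmem k hks
        have : u j ∈ Set.Icc (u k) (v k) := ⟨huk, hgt.le⟩
        have : u j ∈ Set.Icc (u j) (v j) := ⟨le_refl _, hujvj.le⟩
        exact (hdisj (Finset.mem_coe.mpr hks) (Finset.mem_coe.mpr hj) hkj).le_bot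
          ⟨‹u j ∈ Set.Icc (u k) (v k)›, this⟩ |>.elim
      have hujb : u j ≤ b := (hujvj.le.trans hvjc).trans hcb
      obtain ⟨P₁, hP₁, hsum₁⟩ := ih (s.erase j) (Finset.erase_ssubset hj) b (u j) hauj hujb hδ
        (fun k hk => by
          obtain ⟨h1, h2, h3, h4, h5, h6, h7⟩ := hmem k (Finset.mem_of_mem_erase hk)
          exact ⟨h1, h2, hleft k hk, h4, h5, h6, h7⟩)
        (hdisj.mono (by
          intro k hk
          exact Finset.mem_coe.mpr (Finset.mem_of_mem_erase (Finset.mem_coe.mp hk))))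
      set P₂ := single (u j) (v j) (x j) hujxj hxjvj with hP₂def
      have hP₂ : P₂.Subordinate δ := single_subordinate hujxj hxjvj hsubj
      obtain ⟨P₃, hP₃⟩ := cousin (v j) c hvjc δ
        (fun z hz => hδ z ⟨hauj.trans (hujvj.le.trans hz.1), hz.2.trans hcb⟩)
      refine ⟨(P₁.glue P₂).glue P₃, glue_subordinate (glue_subordinate hP₁ hP₂) hP₃, ?_⟩
      rw [glue_Esum, glue_Esum, single_Esum hujxj hxjvj hxjE]
      have := P₃.Esum_nonneg f E
      have hsplit : ∑ k ∈ s, |f (v k) - f (u k)| =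
          |f (v j) - f (u j)| + ∑ k ∈ s.erase j, |f (v k) - f (u k)| :=
        (Finset.add_sum_erase s _ hj).symm
      rw [hsplit]
      linarith

lemma Bnull (a b : ℝ) (f : ℝ → ℝ) (E : Set ℝ) (h : NegVar a b f E) (c : ℝ) (hc : 0 < c) :
    MeasureTheory.volume {x | x ∈ E ∧ x ∈ Set.Ioo a b ∧
      ∀ η > 0, ∃ y, y ≠ x ∧ |y - x| < η ∧ c * |y - x| ≤ |f y - f x|} = 0 := by
  set B := {x | x ∈ E ∧ x ∈ Set.Ioo a b ∧
      ∀ η > 0, ∃ y, y ≠ x ∧ |y - x| < η ∧ c * |y - x| ≤ |f y - f x|} with hB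
  rcases B.eq_empty_or_nonempty with hBe | ⟨x₀, hx₀⟩
  · simp [hBe]
  have hab : a < b := lt_trans hx₀.2.1.1 hx₀.2.1.2
  -- main estimate
  have key : ∀ ε : ℝ, 0 < ε → MeasureTheory.volume B ≤ ENNReal.ofReal (8 * ε / c) := by
    intro ε hε
    obtain ⟨δ, hδ0, hδsum⟩ := h ε hε
    have hδ : ∀ x ∈ Set.Icc a b, 0 < δ x := hδ0
    -- choose y's
    have hch : ∀ p ∈ B, ∃ y', y' ≠ p ∧
        |y' - p| < min (δ p) (min (p - a) (min (b - p) 1)) ∧ c * |y' - p| ≤ |f y' - f p| := by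
      intro p hp
      refine hp.2.2 _ ?_
      have h1 : 0 < δ p := hδ p ⟨hp.2.1.1.le, hp.2.1.2.le⟩
      have h2 : 0 < p - a := by linarith [hp.2.1.1]
      have h3 : 0 < b - p := by linarith [hp.2.1.2]
      positivity
    choose! y hy1 hy2 hy3 using hch
    set r : ℝ → ℝ := fun p => |y p - p| with hr
    have hr_pos : ∀ p ∈ B, 0 < r p := fun p hp => abs_pos.mpr (sub_ne_zero.mpr (hy1 p hp))
    have hrδ : ∀ p ∈ B, r p < δ p := fun p hp => (hy2 p hp).trans_le (min_le_left _ _)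
    have hra : ∀ p ∈ B, r p < p - a := fun p hp =>
      (hy2 p hp).trans_le ((min_le_right _ _).trans (min_le_left _ _))
    have hrb : ∀ p ∈ B, r p < b - p := fun p hp =>
      (hy2 p hp).trans_le ((min_le_right _ _).trans ((min_le_right _ _).trans (min_le_left _ _)))
    have hr1 : ∀ p ∈ B, r p ≤ 1 := fun p hp =>
      ((hy2 p hp).trans_le ((min_le_right _ _).trans ((min_le_right _ _).trans
        (min_le_right _ _)))).le
    obtain ⟨w, hwB, hwdisj, hwcov⟩ :=
      Vitali.exists_disjoint_subfamily_covering_enlargement_closedBall B id r 1 hr1 4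
        (by norm_num)
    -- B is covered by the 4-fold enlargements
    have hcov : B ⊆ ⋃ q ∈ w, Metric.closedBall q (4 * r q) := by
      intro p hp
      obtain ⟨q, hqw, hq⟩ := hwcov p hp
      exact Set.mem_biUnion hqw (hq (Metric.mem_closedBall_self (hr_pos p hp).le))
    have hwcount : w.Countable := by
      apply hwdisj.countable_of_nonempty_interior
      intro q hq
      rw [interior_closedBall _ (hr_pos q (hwB hq)).ne']
      exact ⟨q, Metric.mem_ball_self (hr_pos q (hwB hq))⟩
    -- finite sum estimate
    have hfin : ∀ S : Finset ℝ, ↑S ⊆ w → ∑ q ∈ S, r q ≤ ε / c := by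
      intro S hSw
      have hSB : ∀ q ∈ S, q ∈ B := fun q hq => hwB (hSw hq)
      obtain ⟨P, hP, hsum⟩ := key_lemma a f E δ
        (fun q => min q (y q)) (fun q => max q (y q)) id S b b hab.le le_rfl hδ
        (fun q hq => by
          have hqB := hSB q hq
          have h1 := hr_pos q hqB
          have h2 := hra q hqB
          have h3 := hrb q hqB
          have h4 := hrδ q hqB
          have hy_lb : q - r q ≤ y q := by
            have := abs_le.mp (le_refl (r q) : |y q - q| ≤ r q)
            linarith [this.1]
          have hy_ub : y q ≤ q + r q := by
            have := abs_le.mp (le_refl (r q) : |y q - q| ≤ r q)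
            linarith [this.2]
          beta_reduce
          refine ⟨?_, ?_, ?_, hqB.1, min_le_left _ _, le_max_left _ _, ?_⟩
          · have : q - r q ≤ min q (y q) := le_min (by linarith) hy_lb
            linarith
          · exact min_lt_max.mpr (Ne.symm (hy1 q hqB))
          · have : max q (y q) ≤ q + r q := max_le (by linarith) hy_ub
            linarith
          · intro z hz
            have hz1 : q - r q ≤ z := le_trans (le_min (by linarith) hy_lb) hz.1
            have hz2 : z ≤ q + r q := le_trans hz.2 (max_le (by linarith) hy_ub)
            exact ⟨by simp only [id]; linarith, by simp only [id]; linarith⟩)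
        (by
          intro j hj k hk hjk
          have hdisjballs := hwdisj (hSw hj) (hSw hk) hjk
          refine Set.disjoint_of_subset ?_ ?_ hdisjballs
          · intro z hz
            have hjB := hSB j (Finset.mem_coe.mp hj)
            have hy_lb : j - r j ≤ y j := by
              have := abs_le.mp (le_of_eq rfl : |y j - j| ≤ r j); linarith [this.1]
            have hy_ub : y j ≤ j + r j := by
              have := abs_le.mp (le_of_eq rfl : |y j - j| ≤ r j); linarith [this.2]
            have h1 : j - r j ≤ z := le_trans (le_min (by linarith [hr_pos j hjB]) hy_lb) hz.1
            have h2 : z ≤ j + r j := le_trans hz.2 (max_le (by linarith [hr_pos j hjB]) hy_ub)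
            rw [Metric.mem_closedBall, Real.dist_eq, abs_le]
            simp only [id_eq]
            constructor <;> linarith
          · intro z hz
            have hkB := hSB k (Finset.mem_coe.mp hk)
            have hy_lb : k - r k ≤ y k := by
              have := abs_le.mp (le_of_eq rfl : |y k - k| ≤ r k); linarith [this.1]
            have hy_ub : y k ≤ k + r k := by
              have := abs_le.mp (le_of_eq rfl : |y k - k| ≤ r k); linarith [this.2]
            have h1 : k - r k ≤ z := le_trans (le_min (by linarith [hr_pos k hkB]) hy_lb) hz.1
            have h2 : z ≤ k + r k := le_trans hz.2 (max_le (by linarith [hr_pos k hkB]) hy_ub)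
            rw [Metric.mem_closedBall, Real.dist_eq, abs_le]
            simp only [id_eq]
            constructor <;> linarith)
      have hEsum : P.Esum f E < ε := hδsum P hP
      have hterm : ∀ q ∈ S, c * r q ≤ |f (max q (y q)) - f (min q (y q))| := by
        intro q hq
        have hqB := hSB q hq
        rcases lt_or_gt_of_ne (hy1 q hqB) with hlt | hgt
        · rw [min_eq_right hlt.le, max_eq_left hlt.le]
          calc c * r q ≤ |f (y q) - f q| := hy3 q hqB
          _ = |f q - f (y q)| := abs_sub_comm _ _
        · rw [min_eq_left hgt.le, max_eq_right hgt.le]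
          exact hy3 q hqB
      have : c * ∑ q ∈ S, r q ≤ ∑ q ∈ S, |f (max q (y q)) - f (min q (y q))| := by
        rw [Finset.mul_sum]
        exact Finset.sum_le_sum hterm
      have hlt : c * ∑ q ∈ S, r q < ε := lt_of_le_of_lt (this.trans hsum) hEsum
      rw [le_div_iff₀ hc]
      linarith [mul_comm c (∑ q ∈ S, r q)]
    -- conclude measure bound
    calc MeasureTheory.volume B
        ≤ MeasureTheory.volume (⋃ q ∈ w, Metric.closedBall q (4 * r q)) := measure_mono hcov
      _ ≤ ∑' (q : ↑w), MeasureTheory.volume (Metric.closedBall (↑q : ℝ) (4 * r ↑q)) :=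
          measure_biUnion_le _ hwcount _
      _ = ∑' (q : ↑w), ENNReal.ofReal (2 * (4 * r ↑q)) := by
          congr 1; funext q; exact Real.volume_closedBall _ _
      _ ≤ ENNReal.ofReal (8 * ε / c) := by
          rw [ENNReal.tsum_eq_iSup_sum]
          apply iSup_le
          intro S
          rw [← ENNReal.ofReal_sum_of_nonneg (fun q _ => by
            have := hr_pos (↑q) (hwB q.2); positivity)]
          apply ENNReal.ofReal_le_ofReal
          have hSsum : ∑ q ∈ S.image (Subtype.val), r q ≤ ε / c := by
            apply hfin
            intro q hq
            simp only [Finset.coe_image] at hq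
            obtain ⟨q', _, rfl⟩ := hq
            exact q'.2
          have heq : ∑ q ∈ S, r ↑q = ∑ q ∈ S.image Subtype.val, r q :=
            (Finset.sum_image (fun p _ q _ h => Subtype.ext h)).symm
          have h8 : (∑ q ∈ S, 2 * (4 * r ↑q)) = 8 * ∑ q ∈ S, r ↑q := by
            rw [Finset.mul_sum]; apply Finset.sum_congr rfl; intro q _; ring
          rw [h8, heq]
          calc 8 * ∑ q ∈ S.image Subtype.val, r q ≤ 8 * (ε / c) := by
                apply mul_le_mul_of_nonneg_left hSsum; norm_num
            _ = 8 * ε / c := by ring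
  -- from the estimate, B is null
  refine le_antisymm ?_ zero_le
  refine ENNReal.le_of_forall_pos_le_add fun η hη _ => ?_
  rw [zero_add]
  calc MeasureTheory.volume B ≤ ENNReal.ofReal (8 * (c * (η : ℝ) / 8) / c) :=
        key _ (by positivity)
    _ ≤ (η : ℝ≥0∞) := by
        have he : (8 : ℝ) * (c * (η : ℝ) / 8) / c = (η : ℝ) := by field_simp
        rw [he]
        exact le_of_eq ENNReal.ofReal_coe_nnreal

/-- if `f` has negligible variation on `E`, then `f' = 0` a.e. on the set of
points of `E` where `f` is differentiable; more strongly, the set of points of `E` where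
some Dini derivative is nonzero is null. -/
theorem stmt19 (a b : ℝ) (f : ℝ → ℝ) (E : Set ℝ) (hE : E ⊆ Set.Icc a b)
    (h : NegVar a b f E) :
    MeasureTheory.volume {x ∈ E | DifferentiableAt ℝ f x ∧ deriv f x ≠ 0} = 0 ∧
    MeasureTheory.volume {x ∈ E | ¬ Filter.Tendsto (fun y => |(f y - f x) / (y - x)|)
      (nhdsWithin x {x}ᶜ) (nhds 0)} = 0 := by
  -- the second (larger) set
  have h2 : MeasureTheory.volume {x ∈ E | ¬ Filter.Tendsto (fun y => |(f y - f x) / (y - x)|)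
      (nhdsWithin x {x}ᶜ) (nhds 0)} = 0 := by
    set Bad := {x ∈ E | ¬ Filter.Tendsto (fun y => |(f y - f x) / (y - x)|)
      (nhdsWithin x {x}ᶜ) (nhds 0)} with hBad
    have hcover : Bad ⊆ ({a, b} : Set ℝ) ∪ ⋃ (k : ℕ), {x | x ∈ E ∧ x ∈ Set.Ioo a b ∧
        ∀ η > 0, ∃ y, y ≠ x ∧ |y - x| < η ∧ (1/(k+1) : ℝ) * |y - x| ≤ |f y - f x|} := by
      rintro x ⟨hxE, hx⟩
      by_cases hxa : x = a
      · exact Or.inl (by simp [hxa])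
      by_cases hxb : x = b
      · exact Or.inl (by simp [hxb])
      have hxIcc := hE hxE
      have hxIoo : x ∈ Set.Ioo a b :=
        ⟨lt_of_le_of_ne hxIcc.1 (Ne.symm hxa), lt_of_le_of_ne hxIcc.2 hxb⟩
      rw [Metric.tendsto_nhds] at hx
      push_neg at hx
      obtain ⟨ε, hε, hne⟩ := hx
      obtain ⟨k, hk⟩ := exists_nat_gt (1/ε)
      have hk1 : (1/(k+1) : ℝ) ≤ ε := by
        rw [div_lt_iff₀ hε] at hk
        rw [div_le_iff₀ (by positivity)]
        nlinarith
      refine Or.inr (Set.mem_iUnion.mpr ⟨k, hxE, hxIoo, fun η hη => ?_⟩)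
      have hev : ∀ᶠ y in nhdsWithin x {x}ᶜ, y ∈ Metric.ball x η :=
        Filter.Eventually.filter_mono nhdsWithin_le_nhds
          (IsOpen.eventually_mem Metric.isOpen_ball (Metric.mem_ball_self hη))
      have hne' : ∀ᶠ y in nhdsWithin x {x}ᶜ, y ∈ ({x}ᶜ : Set ℝ) := eventually_mem_nhdsWithin
      obtain ⟨y, hy1, hy2, hy3⟩ := (hne.and_eventually (hev.and hne')).exists
      have hyne : y ≠ x := hy3
      have hdist : |y - x| < η := by rwa [Metric.mem_ball, Real.dist_eq] at hy2
      have hpos : 0 < |y - x| := abs_pos.mpr (sub_ne_zero.mpr hyne)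
      have hge : ε ≤ |f y - f x| / |y - x| := by
        have := hy1
        rwa [Real.dist_0_eq_abs, abs_abs, abs_div] at this
      refine ⟨y, hyne, hdist, ?_⟩
      have h1 : ε * |y - x| ≤ |f y - f x| := by
        rw [le_div_iff₀ hpos] at hge
        linarith
      have h2 : (1/(k+1) : ℝ) * |y - x| ≤ ε * |y - x| :=
        mul_le_mul_of_nonneg_right hk1 hpos.le
      linarith
    refine measure_mono_null hcover (measure_union_null ?_ (measure_iUnion_null fun k => ?_))
    · exact Set.Finite.measure_zero (Set.toFinite _) _
    · exact Bnull a b f E h (1/(k+1)) (by positivity)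
  refine ⟨?_, h2⟩
  refine measure_mono_null ?_ h2
  rintro x ⟨hxE, hdiff, hd0⟩
  refine ⟨hxE, fun hT => ?_⟩
  have hslope : Filter.Tendsto (slope f x) (nhdsWithin x {x}ᶜ) (nhds (deriv f x)) :=
    hasDerivAt_iff_tendsto_slope.mp hdiff.hasDerivAt
  have habs := hslope.abs
  have heq : (fun y => |slope f x y|) = fun y => |(f y - f x) / (y - x)| := by
    funext y; rw [slope_def_field]
  rw [heq] at habs
  exact hd0 (abs_eq_zero.mp (tendsto_nhds_unique habs hT))
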